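/- Let n = 3 and G = conv{o_1, o_2, o_3} ⊆ S with v_0 ∉ G and o_i ∈ (v_0, v_i] for i = 1,2,3 (so I(o_i) = {0, i} or {i}, and C(o_i) = {y : h_j · y ≤ 0 for j ∈ {1,2,3} \ {i}}). Suppose B ∩ cone(G) = {0}, where cone(G) = {y : h_j · y ≤ 0, j = 1,2,3}. Then there is no continuous map f : G → B \ {0} with f(x) ∈ C(x) for all x ∈ G. Consequently, such a map exists if and only if B ∩ cone(G) ≠ {0}. -/

import Mathlib

namespace Sperner12

/-- antisymmetric edge weight on labels -/
def wgt : Fin 3 → Fin 3 → ℤ := fun a b =>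
  if a = 0 ∧ b = 1 then 1 else if a = 1 ∧ b = 0 then -1 else 0

def chi : Fin 3 → ℤ := fun a => if a = 1 then 1 else 0

lemma wgt_anti (a b : Fin 3) : wgt a b + wgt b a = 0 := by revert a b; decide
lemma wgt_ne0 (a b : Fin 3) (ha : a ≠ 0) (hb : b ≠ 0) : wgt a b = 0 := by
  revert ha hb; revert a b; decide
lemma wgt_ne1 (a b : Fin 3) (ha : a ≠ 1) (hb : b ≠ 1) : wgt a b = 0 := by
  revert ha hb; revert a b; decide
lemma wgt_tel (a b : Fin 3) (ha : a ≠ 2) (hb : b ≠ 2) : wgt a b = chi b - chi a := by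
  revert ha hb; revert a b; decide
lemma wgt_cyc (a b c : Fin 3) (h : wgt a b + wgt b c + wgt c a ≠ 0) :
    (a = 0 ∨ b = 0 ∨ c = 0) ∧ (a = 1 ∨ b = 1 ∨ c = 1) ∧ (a = 2 ∨ b = 2 ∨ c = 2) := by
  revert h; revert a b c; decide
lemma fin3_eq_one (a : Fin 3) (h0 : a ≠ 0) (h2 : a ≠ 2) : a = 1 := by
  revert h0 h2; revert a; decide
lemma chi_ne_one (a : Fin 3) (h : a ≠ 1) : chi a = 0 := by revert h; revert a; decide

lemma pick {α : Type*} (q0 q1 q2 : α) (P : α → Prop) (h : P q0 ∨ P q1 ∨ P q2) :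
    ∃ a, (a = q0 ∨ a = q1 ∨ a = q2) ∧ P a := by
  rcases h with h | h | h
  exacts [⟨q0, Or.inl rfl, h⟩, ⟨q1, Or.inr (Or.inl rfl), h⟩, ⟨q2, Or.inr (Or.inr rfl), h⟩]

variable (L : ℕ × ℕ → Fin 3) (N : ℕ)

/-- grid of cell base points for upward triangles -/
def up : Finset (ℕ × ℕ) :=
  (Finset.range (N+1) ×ˢ Finset.range (N+1)).filter (fun p => p.1 + p.2 + 1 ≤ N)

/-- grid of cell base points for downward triangles -/
def dn : Finset (ℕ × ℕ) :=
  (Finset.range (N+1) ×ˢ Finset.range (N+1)).filter (fun p => p.1 + p.2 + 2 ≤ N)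

lemma mem_up {p : ℕ × ℕ} : p ∈ up N ↔ p.1 + p.2 + 1 ≤ N := by
  simp only [up, Finset.mem_filter, Finset.mem_product, Finset.mem_range]
  omega

lemma mem_dn {p : ℕ × ℕ} : p ∈ dn N ↔ p.1 + p.2 + 2 ≤ N := by
  simp only [dn, Finset.mem_filter, Finset.mem_product, Finset.mem_range]
  omega

/-- horizontal edge term -/
def A (p : ℕ × ℕ) : ℤ := wgt (L p) (L (p.1 + 1, p.2))
/-- vertical edge term (downward) -/
def Vt (p : ℕ × ℕ) : ℤ := wgt (L (p.1, p.2 + 1)) (L p)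
/-- diagonal edge term -/
def Dg (p : ℕ × ℕ) : ℤ := wgt (L (p.1 + 1, p.2)) (L (p.1, p.2 + 1))

def dU (p : ℕ × ℕ) : ℤ := A L p + Dg L p + Vt L p
def dD (p : ℕ × ℕ) : ℤ := -(Vt L (p.1 + 1, p.2)) - A L (p.1, p.2 + 1) - Dg L p

theorem sperner (hN : 1 ≤ N)
    (h0 : ∀ x y, x + y = N → L (x, y) ≠ 0)
    (h1 : ∀ y, y ≤ N → L (0, y) ≠ 1)
    (h2 : ∀ x, x ≤ N → L (x, 0) ≠ 2) :
    ∃ p a b c : ℕ × ℕ,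
      (p.1 ≤ a.1 ∧ a.1 ≤ p.1 + 1 ∧ p.2 ≤ a.2 ∧ a.2 ≤ p.2 + 1 ∧ a.1 + a.2 ≤ N) ∧
      (p.1 ≤ b.1 ∧ b.1 ≤ p.1 + 1 ∧ p.2 ≤ b.2 ∧ b.2 ≤ p.2 + 1 ∧ b.1 + b.2 ≤ N) ∧
      (p.1 ≤ c.1 ∧ c.1 ≤ p.1 + 1 ∧ p.2 ≤ c.2 ∧ c.2 ≤ p.2 + 1 ∧ c.1 + c.2 ≤ N) ∧
      L a = 0 ∧ L b = 1 ∧ L c = 2 := by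
  -- the diagonal sums cancel
  have hsub : dn N ⊆ up N := fun p hp => mem_up N |>.2 (by have := (mem_dn N).1 hp; omega)
  have hDg : ∑ p ∈ up N, Dg L p - ∑ p ∈ dn N, Dg L p = 0 := by
    rw [← Finset.sum_sdiff_eq_sub hsub]
    refine Finset.sum_eq_zero fun p hp => ?_
    have hp' : p.1 + p.2 + 1 = N := by
      have ha := (mem_up N).1 (Finset.mem_sdiff.1 hp).1
      have hb := (mem_dn N).not.1 (Finset.mem_sdiff.1 hp).2
      omega
    exact wgt_ne0 _ _ (h0 _ _ (by omega)) (h0 _ _ (by omega))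
  -- vertical sums
  have hVt : ∑ p ∈ up N, Vt L p - ∑ p ∈ dn N, Vt L (p.1 + 1, p.2) = 0 := by
    have himg : ∑ p ∈ dn N, Vt L (p.1 + 1, p.2)
        = ∑ p ∈ (up N).filter (fun p => 0 < p.1), Vt L p := by
      refine Finset.sum_nbij' (fun p => (p.1 + 1, p.2)) (fun p => (p.1 - 1, p.2)) ?_ ?_ ?_ ?_ ?_
      · intro a ha
        simp only [mem_dn] at ha
        simp only [Finset.mem_filter, mem_up]
        omega
      · intro a ha
        simp only [Finset.mem_filter, mem_up] at ha
        simp only [mem_dn]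
        omega
      · intro a ha
        obtain ⟨x, y⟩ := a
        simp only [Prod.mk.injEq, and_true, true_and]
        omega
      · intro a ha
        simp only [Finset.mem_filter, mem_up] at ha
        obtain ⟨x, y⟩ := a
        simp only [Prod.mk.injEq, and_true, true_and] at ha ⊢
        omega
      · intro a ha; rfl
    rw [himg, ← Finset.sum_filter_add_sum_filter_not (up N) (fun p => 0 < p.1) (Vt L)]
    have hz : ∑ p ∈ (up N).filter (fun p => ¬ 0 < p.1), Vt L p = 0 := by
      refine Finset.sum_eq_zero fun p hp => ?_
      simp only [Finset.mem_filter, mem_up] at hp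
      obtain ⟨x, y⟩ := p
      have hx : x = 0 := by omega
      subst hx
      exact wgt_ne1 _ _ (h1 _ (by omega)) (h1 _ (by omega))
    omega
  -- horizontal sums telescope to 1
  have hA : ∑ p ∈ up N, A L p - ∑ p ∈ dn N, A L (p.1, p.2 + 1) = 1 := by
    have himg : ∑ p ∈ dn N, A L (p.1, p.2 + 1)
        = ∑ p ∈ (up N).filter (fun p => 0 < p.2), A L p := by
      refine Finset.sum_nbij' (fun p => (p.1, p.2 + 1)) (fun p => (p.1, p.2 - 1)) ?_ ?_ ?_ ?_ ?_
      · intro a ha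
        simp only [mem_dn] at ha
        simp only [Finset.mem_filter, mem_up]
        omega
      · intro a ha
        simp only [Finset.mem_filter, mem_up] at ha
        simp only [mem_dn]
        omega
      · intro a ha
        obtain ⟨x, y⟩ := a
        simp only [Prod.mk.injEq, and_true, true_and]
        omega
      · intro a ha
        simp only [Finset.mem_filter, mem_up] at ha
        obtain ⟨x, y⟩ := a
        simp only [Prod.mk.injEq, and_true, true_and] at ha ⊢
        omega
      · intro a ha; rfl
    rw [himg, ← Finset.sum_filter_add_sum_filter_not (up N) (fun p => 0 < p.2) (A L)]
    have hbot : ∑ p ∈ (up N).filter (fun p => ¬ 0 < p.2), A L p = 1 := by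
      have hbij : ∑ p ∈ (up N).filter (fun p => ¬ 0 < p.2), A L p
          = ∑ x ∈ Finset.range N, A L (x, 0) := by
        refine Finset.sum_nbij' (fun p => p.1) (fun x => (x, 0)) ?_ ?_ ?_ ?_ ?_
        · intro a ha
          simp only [Finset.mem_filter, mem_up] at ha
          simp only [Finset.mem_range]; omega
        · intro a ha
          simp only [Finset.mem_range] at ha
          simp only [Finset.mem_filter, mem_up]
          omega
        · intro a ha
          simp only [Finset.mem_filter, mem_up] at ha
          obtain ⟨x, y⟩ := a
          simp only [Prod.mk.injEq, and_true, true_and]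
          omega
        · intro a ha; rfl
        · intro a ha
          simp only [Finset.mem_filter, mem_up] at ha
          obtain ⟨x, y⟩ := a
          have hy : y = 0 := by omega
          subst hy
          rfl
      rw [hbij]
      have htel : ∀ x ∈ Finset.range N, A L (x, 0)
          = chi (L (x + 1, 0)) - chi (L (x, 0)) := by
        intro x hx
        simp only [Finset.mem_range] at hx
        exact wgt_tel _ _ (h2 _ (by omega)) (h2 _ (by omega))
      rw [Finset.sum_congr rfl htel, Finset.sum_range_sub (fun x => chi (L (x, 0)))]
      show chi (L (N, 0)) - chi (L (0, 0)) = 1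
      have hend : L (N, 0) = 1 := fin3_eq_one _ (h0 N 0 (by omega)) (h2 N (le_refl N))
      have hstart : chi (L (0, 0)) = 0 := chi_ne_one _ (h1 0 (by omega))
      rw [hend, hstart]
      rfl
    omega
  -- total degree is 1
  have e1 : ∑ p ∈ up N, dU L p
      = (∑ p ∈ up N, A L p) + (∑ p ∈ up N, Dg L p) + ∑ p ∈ up N, Vt L p := by
    simp only [dU, Finset.sum_add_distrib]
  have e2 : ∑ p ∈ dn N, dD L p
      = -(∑ p ∈ dn N, Vt L (p.1 + 1, p.2)) - (∑ p ∈ dn N, A L (p.1, p.2 + 1))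
        - ∑ p ∈ dn N, Dg L p := by
    simp only [dD, Finset.sum_sub_distrib, Finset.sum_neg_distrib]
  have hS : ∑ p ∈ up N, dU L p + ∑ p ∈ dn N, dD L p = 1 := by
    rw [e1, e2]; omega
  -- extract a nonzero cell
  have hex : (∃ p ∈ up N, dU L p ≠ 0) ∨ (∃ p ∈ dn N, dD L p ≠ 0) := by
    by_contra hcon
    push_neg at hcon
    rw [Finset.sum_eq_zero hcon.1, Finset.sum_eq_zero hcon.2] at hS
    omega
  rcases hex with ⟨p, hp, hne⟩ | ⟨p, hp, hne⟩
  · rw [mem_up] at hp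
    have hcyc := wgt_cyc (L p) (L (p.1 + 1, p.2)) (L (p.1, p.2 + 1)) (by
      intro hzero
      apply hne
      simp only [dU, A, Dg, Vt]
      omega)
    obtain ⟨hc0, hc1, hc2⟩ := hcyc
    have hmem : ∀ q : ℕ × ℕ, (q = p ∨ q = (p.1 + 1, p.2) ∨ q = (p.1, p.2 + 1)) →
        p.1 ≤ q.1 ∧ q.1 ≤ p.1 + 1 ∧ p.2 ≤ q.2 ∧ q.2 ≤ p.2 + 1 ∧ q.1 + q.2 ≤ N := by
      rintro q (rfl | rfl | rfl) <;> omega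
    obtain ⟨a, hamem, ha⟩ := pick p (p.1 + 1, p.2) (p.1, p.2 + 1) (fun q => L q = 0) hc0
    obtain ⟨b, hbmem, hb⟩ := pick p (p.1 + 1, p.2) (p.1, p.2 + 1) (fun q => L q = 1) hc1
    obtain ⟨c, hcmem, hc⟩ := pick p (p.1 + 1, p.2) (p.1, p.2 + 1) (fun q => L q = 2) hc2
    exact ⟨p, a, b, c, hmem a hamem, hmem b hbmem, hmem c hcmem, ha, hb, hc⟩
  · rw [mem_dn] at hp
    have hcyc := wgt_cyc (L (p.1 + 1, p.2)) (L (p.1 + 1, p.2 + 1)) (L (p.1, p.2 + 1)) (by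
      intro hzero
      apply hne
      simp only [dD, A, Dg, Vt]
      have w1 := wgt_anti (L (p.1 + 1, p.2)) (L (p.1 + 1, p.2 + 1))
      have w2 := wgt_anti (L (p.1 + 1, p.2 + 1)) (L (p.1, p.2 + 1))
      have w3 := wgt_anti (L (p.1, p.2 + 1)) (L (p.1 + 1, p.2))
      omega)
    obtain ⟨hc0, hc1, hc2⟩ := hcyc
    have hmem : ∀ q : ℕ × ℕ,
        (q = (p.1 + 1, p.2) ∨ q = (p.1 + 1, p.2 + 1) ∨ q = (p.1, p.2 + 1)) →
        p.1 ≤ q.1 ∧ q.1 ≤ p.1 + 1 ∧ p.2 ≤ q.2 ∧ q.2 ≤ p.2 + 1 ∧ q.1 + q.2 ≤ N := by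
      rintro q (rfl | rfl | rfl) <;> omega
    obtain ⟨a, hamem, ha⟩ :=
      pick (p.1 + 1, p.2) (p.1 + 1, p.2 + 1) (p.1, p.2 + 1) (fun q => L q = 0) hc0
    obtain ⟨b, hbmem, hb⟩ :=
      pick (p.1 + 1, p.2) (p.1 + 1, p.2 + 1) (p.1, p.2 + 1) (fun q => L q = 1) hc1
    obtain ⟨c, hcmem, hc⟩ :=
      pick (p.1 + 1, p.2) (p.1 + 1, p.2 + 1) (p.1, p.2 + 1) (fun q => L q = 2) hc2
    exact ⟨p, a, b, c, hmem a hamem, hmem b hbmem, hmem c hcmem, ha, hb, hc⟩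

lemma fin4cases (j : Fin 4) (hj : j ≠ 0) : j = 1 ∨ j = 2 ∨ j = 3 := by
  revert hj; revert j; decide

end Sperner12

open Matrix

/-- The set of indices of strictly positive barycentric coordinates of `x`
with respect to the affine basis (simplex vertices) `b`. -/
noncomputable def isupp {n : ℕ} (b : AffineBasis (Fin (n + 1)) ℝ (Fin n → ℝ))
    (x : Fin n → ℝ) : Set (Fin (n + 1)) :=
  {i | 0 < b.coord i x}

/-- The inward-pointing cone determined by the outward facet normals `h`
and an index set `I`: all constraints `h j ⬝ᵥ y ≤ 0` for `j ∉ I`, `j ≠ 0`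
(the exit facet `0` imposes no constraint). -/
def icone {n : ℕ} (h : Fin (n + 1) → Fin n → ℝ) (I : Set (Fin (n + 1))) :
    Set (Fin n → ℝ) :=
  {y | ∀ j : Fin (n + 1), j ≠ 0 → j ∉ I → h j ⬝ᵥ y ≤ 0}

/-- `h j` is an outward normal to the facet of the simplex with vertices `v`
opposite the vertex `v j`, for every `j ≠ 0`. -/
def IsOutwardNormals {n : ℕ} (v h : Fin (n + 1) → Fin n → ℝ) : Prop :=
  ∀ j : Fin (n + 1), j ≠ 0 →
    (∀ i, i ≠ j → ∀ k, k ≠ j → h j ⬝ᵥ v i = h j ⬝ᵥ v k) ∧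
    (∀ i, i ≠ j → h j ⬝ᵥ v j < h j ⬝ᵥ v i)

/-- For `n = 3`, `G = conv{o₁,o₂,o₃} ⊆ S` with `v₀ ∉ G` and `oᵢ ∈ (v₀, vᵢ]`:
a continuous nowhere-vanishing selection `f : G → B` with `f(x) ∈ C(x)` exists
iff `B ∩ cone(G) ≠ {0}`, where `cone(G) = {y : h_j ⬝ᵥ y ≤ 0, j = 1,2,3}`. -/
theorem stmt12 (bb : AffineBasis (Fin 4) ℝ (Fin 3 → ℝ))
    (h : Fin 4 → Fin 3 → ℝ) (hout : IsOutwardNormals (⇑bb) h)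
    (B : Submodule ℝ (Fin 3 → ℝ))
    (o : Fin 4 → Fin 3 → ℝ) (t : Fin 4 → ℝ)
    (ht : ∀ i : Fin 4, i ≠ 0 → t i ∈ Set.Ioc (0 : ℝ) 1)
    (ho : ∀ i : Fin 4, i ≠ 0 → o i = AffineMap.lineMap (bb 0) (bb i) (t i))
    (G : Set (Fin 3 → ℝ))
    (hG : G = convexHull ℝ ({o 1, o 2, o 3} : Set (Fin 3 → ℝ)))
    (hv0 : bb 0 ∉ G) :
    (∃ f : (Fin 3 → ℝ) → (Fin 3 → ℝ), ContinuousOn f G ∧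
        ∀ x ∈ G, f x ∈ B ∧ f x ≠ 0 ∧ f x ∈ icone h (isupp bb x)) ↔
      (↑B ∩ {y : Fin 3 → ℝ | ∀ j : Fin 4, j ≠ 0 → h j ⬝ᵥ y ≤ 0} :
        Set (Fin 3 → ℝ)) ≠ {0} := by
  classical
  have hS0 : (0 : Fin 3 → ℝ) ∈
      (↑B ∩ {y : Fin 3 → ℝ | ∀ j : Fin 4, j ≠ 0 → h j ⬝ᵥ y ≤ 0} : Set (Fin 3 → ℝ)) :=
    ⟨B.zero_mem, fun j _ => by simp⟩
  constructor
  · rintro ⟨f, hfc, hf⟩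
    set combo : (Fin 3 → ℝ) → (Fin 3 → ℝ) :=
      fun μ => μ 0 • o 1 + μ 1 • o 2 + μ 2 • o 3 with hcombo
    -- membership of convex combinations
    have hP : ∀ μ : Fin 3 → ℝ, μ 0 + μ 1 + μ 2 = 1 →
        Finset.univ.affineCombination ℝ (![o 1, o 2, o 3] : Fin 3 → Fin 3 → ℝ) μ = combo μ := by
      intro μ hμ
      rw [Finset.affineCombination_eq_linear_combination _ _ _
        (by rw [Fin.sum_univ_three]; exact hμ), Fin.sum_univ_three]
      simp [hcombo]
    have hmemG : ∀ μ : Fin 3 → ℝ, (∀ i, 0 ≤ μ i) → μ 0 + μ 1 + μ 2 = 1 → combo μ ∈ G := by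
      intro μ hμ0 hμ1
      rw [← hP μ hμ1, hG]
      refine convexHull_mono ?_
        (affineCombination_mem_convexHull (fun i _ => hμ0 i)
          (by rw [Fin.sum_univ_three]; exact hμ1))
      rintro y ⟨i, rfl⟩
      fin_cases i <;> simp
    -- barycentric coordinates of convex combinations
    have hcoord : ∀ μ : Fin 3 → ℝ, μ 0 + μ 1 + μ 2 = 1 → ∀ k : Fin 4, k ≠ 0 →
        bb.coord k (combo μ)
          = t k * (if k = 1 then μ 0 else if k = 2 then μ 1 else μ 2) := by
      have hco : ∀ j k : Fin 4, j ≠ 0 →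
          bb.coord k (o j) = if k = j then t j else if k = 0 then 1 - t j else 0 := by
        intro j k hj
        rw [ho j hj, AffineMap.apply_lineMap, AffineMap.lineMap_apply]
        simp only [AffineBasis.coord_apply, vsub_eq_sub, vadd_eq_add, smul_eq_mul]
        rcases eq_or_ne k j with rfl | hkj
        · simp [hj]
        · rcases eq_or_ne k 0 with rfl | hk0
          · simp [Ne.symm hj, hkj]; ring
          · simp [hkj, hk0]
      intro μ hμ1 k hk
      rw [← hP μ hμ1]
      rw [Finset.univ.map_affineCombination (![o 1, o 2, o 3] : Fin 3 → Fin 3 → ℝ) μ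
        (by rw [Fin.sum_univ_three]; exact hμ1) (bb.coord k)]
      rw [Finset.affineCombination_eq_linear_combination _ _ _
        (by rw [Fin.sum_univ_three]; exact hμ1), Fin.sum_univ_three]
      simp only [Function.comp_apply, Matrix.cons_val_zero, Matrix.cons_val_one,
        Matrix.head_cons, Matrix.cons_val_two, Matrix.tail_cons, smul_eq_mul]
      rw [hco 1 k (by decide), hco 2 k (by decide), hco 3 k (by decide)]
      rcases Sperner12.fin4cases k hk with rfl | rfl | rfl <;> simp <;> ring
    -- the grid
    set μf : ℕ → ℕ × ℕ → Fin 3 → ℝ := fun N p i =>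
      if i = 0 then ((N : ℝ) - p.1 - p.2)/N else if i = 1 then (p.1 : ℝ)/N else (p.2 : ℝ)/N
      with hμf
    set gp : ℕ → ℕ × ℕ → (Fin 3 → ℝ) := fun N p => combo (μf N p) with hgp
    have hμ0v : ∀ (N : ℕ) (p : ℕ × ℕ), μf N p 0 = ((N : ℝ) - p.1 - p.2)/N := by
      intro N p; rw [hμf]; rfl
    have hμ1v : ∀ (N : ℕ) (p : ℕ × ℕ), μf N p 1 = (p.1 : ℝ)/N := by
      intro N p; rw [hμf]; rfl
    have hμ2v : ∀ (N : ℕ) (p : ℕ × ℕ), μf N p 2 = (p.2 : ℝ)/N := by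
      intro N p; rw [hμf]; rfl
    have hw0 : ∀ N : ℕ, 1 ≤ N → ∀ p : ℕ × ℕ, p.1 + p.2 ≤ N → ∀ i, 0 ≤ μf N p i := by
      intro N hN p hp i
      have hNR : (0 : ℝ) < N := by exact_mod_cast hN
      have hc : (p.1 : ℝ) + p.2 ≤ N := by exact_mod_cast hp
      simp only [hμf]
      split_ifs
      · apply div_nonneg (by linarith) hNR.le
      · positivity
      · positivity
    have hw1 : ∀ N : ℕ, 1 ≤ N → ∀ p : ℕ × ℕ,
        μf N p 0 + μf N p 1 + μf N p 2 = 1 := by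
      intro N hN p
      have hNR : (0 : ℝ) < N := by exact_mod_cast hN
      rw [hμ0v, hμ1v, hμ2v]
      field_simp
      ring
    have hgpG : ∀ N : ℕ, 1 ≤ N → ∀ p : ℕ × ℕ, p.1 + p.2 ≤ N → gp N p ∈ G := by
      intro N hN p hp
      rw [hgp]
      exact hmemG _ (hw0 N hN p hp) (hw1 N hN p)
    -- vanishing coordinates force the cone constraints
    have hkey : ∀ N : ℕ, 1 ≤ N → ∀ p : ℕ × ℕ, p.1 + p.2 ≤ N → ∀ k : Fin 4, k ≠ 0 →
        (if k = 1 then μf N p 0 else if k = 2 then μf N p 1 else μf N p 2) = 0 →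
        h k ⬝ᵥ f (gp N p) ≤ 0 := by
      intro N hN p hp k hk hw
      refine (hf _ (hgpG N hN p hp)).2.2 k hk ?_
      simp only [isupp, Set.mem_setOf_eq, not_lt]
      rw [hgp]
      rw [hcoord (μf N p) (hw1 N hN p) k hk, hw, mul_zero]
    by_cases hcase : ∃ x ∈ G, ∀ j : Fin 4, j ≠ 0 → h j ⬝ᵥ f x ≤ 0
    · obtain ⟨x, hxG, hx⟩ := hcase
      intro heq
      have hmem : f x ∈ ({0} : Set (Fin 3 → ℝ)) := heq ▸ ⟨(hf x hxG).1, hx⟩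
      exact (hf x hxG).2.1 (by simpa using hmem)
    · push_neg at hcase
      have htot : ∀ x ∈ G, ∃ j : Fin 4, j ≠ 0 ∧ 0 < h j ⬝ᵥ f x := hcase
      -- the labelling
      set L : ℕ → ℕ × ℕ → Fin 3 := fun N p =>
        if 0 < h 1 ⬝ᵥ f (gp N p) ∧ p.1 + p.2 < N then 0
        else if 0 < h 2 ⬝ᵥ f (gp N p) ∧ 0 < p.1 then 1 else 2 with hL
      have hLspec : ∀ N p,
          (L N p = 0 → 0 < h 1 ⬝ᵥ f (gp N p) ∧ p.1 + p.2 < N) ∧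
          (L N p = 1 → 0 < h 2 ⬝ᵥ f (gp N p) ∧ 0 < p.1) ∧
          (L N p = 2 → ¬(0 < h 1 ⬝ᵥ f (gp N p) ∧ p.1 + p.2 < N) ∧
            ¬(0 < h 2 ⬝ᵥ f (gp N p) ∧ 0 < p.1)) := by
        intro N p
        simp only [hL]
        split_ifs with hc1 hc2
        · exact ⟨fun _ => hc1, fun hx => absurd hx (by decide),
            fun hx => absurd hx (by decide)⟩
        · exact ⟨fun hx => absurd hx (by decide), fun _ => hc2,
            fun hx => absurd hx (by decide)⟩
        · exact ⟨fun hx => absurd hx (by decide), fun hx => absurd hx (by decide),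
            fun _ => ⟨hc1, hc2⟩⟩
      -- weight vanishing facts
      have hwz1 : ∀ N : ℕ, 1 ≤ N → ∀ p : ℕ × ℕ, p.1 + p.2 = N → μf N p 0 = 0 := by
        intro N hN p hp
        rw [hμ0v]
        have : ((N : ℝ) - p.1 - p.2) = 0 := by
          have : ((p.1 + p.2 : ℕ) : ℝ) = (N : ℝ) := by rw [hp]
          push_cast at this
          linarith
        rw [this, zero_div]
      have hwz2 : ∀ (N : ℕ) (p : ℕ × ℕ), p.1 = 0 → μf N p 1 = 0 := by
        intro N p hp
        rw [hμ1v, hp]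
        simp
      have hwz3 : ∀ (N : ℕ) (p : ℕ × ℕ), p.2 = 0 → μf N p 2 = 0 := by
        intro N p hp
        rw [hμ2v, hp]
        simp
      -- label 2 forces the third dot product positive
      have hpos3 : ∀ N : ℕ, 1 ≤ N → ∀ p : ℕ × ℕ, p.1 + p.2 ≤ N → L N p = 2 →
          0 < h 3 ⬝ᵥ f (gp N p) := by
        intro N hN p hp hL2
        obtain ⟨hnc1, hnc2⟩ := (hLspec N p).2.2 hL2
        obtain ⟨j, hj0, hjpos⟩ := htot _ (hgpG N hN p hp)
        rcases Sperner12.fin4cases j hj0 with rfl | rfl | rfl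
        · exfalso
          by_cases hlt : p.1 + p.2 < N
          · exact hnc1 ⟨hjpos, hlt⟩
          · have hpe : p.1 + p.2 = N := by omega
            linarith [hkey N hN p hp 1 (by decide) (hwz1 N hN p hpe)]
        · exfalso
          by_cases hx : 0 < p.1
          · exact hnc2 ⟨hjpos, hx⟩
          · have hx0 : p.1 = 0 := by omega
            linarith [hkey N hN p hp 2 (by decide) (hwz2 N p hx0)]
        · exact hjpos
      -- build rainbow points on finer and finer grids
      have hrain : ∀ n : ℕ, ∃ pa pb pc : Fin 3 → ℝ,
          pa ∈ G ∧ pb ∈ G ∧ pc ∈ G ∧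
          0 < h 1 ⬝ᵥ f pa ∧ 0 < h 2 ⬝ᵥ f pb ∧ 0 < h 3 ⬝ᵥ f pc ∧
          ‖pb - pa‖ ≤ (‖o 2 - o 1‖ + ‖o 3 - o 1‖) / ((n : ℝ) + 1) ∧
          ‖pc - pa‖ ≤ (‖o 2 - o 1‖ + ‖o 3 - o 1‖) / ((n : ℝ) + 1) := by
        intro n
        set N := n + 1 with hNdef
        have hN : 1 ≤ N := by omega
        have hNR : (0 : ℝ) < N := by positivity
        have hNcast : ((N : ℕ) : ℝ) = (n : ℝ) + 1 := by rw [hNdef]; push_cast; ring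
        have hh0 : ∀ x y, x + y = N → L N (x, y) ≠ 0 := by
          intro x y hxy hL0
          have := ((hLspec N (x, y)).1 hL0).2
          simp only at this
          omega
        have hh1 : ∀ y, y ≤ N → L N (0, y) ≠ 1 := by
          intro y hy hL1
          have := ((hLspec N (0, y)).2.1 hL1).2
          simp at this
        have hh2 : ∀ x, x ≤ N → L N (x, 0) ≠ 2 := by
          intro x hx hL2
          have hsum : (x, 0).1 + (x, 0).2 ≤ N := by simp; omega
          have h3' := hpos3 N hN (x, 0) hsum hL2
          linarith [hkey N hN (x, 0) hsum 3 (by decide) (hwz3 N (x, 0) rfl)]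
        obtain ⟨p, a, b, c, hba, hbb, hbc, hLa, hLb, hLc⟩ :=
          Sperner12.sperner (L N) N hN hh0 hh1 hh2
        -- distance bound
        have hdiff : ∀ q q' : ℕ × ℕ, q.1 ≤ q'.1 + 1 → q'.1 ≤ q.1 + 1 →
            q.2 ≤ q'.2 + 1 → q'.2 ≤ q.2 + 1 →
            ‖gp N q' - gp N q‖ ≤ (‖o 2 - o 1‖ + ‖o 3 - o 1‖) / N := by
          intro q q' h1' h2' h3' h4'
          have e : gp N q' - gp N q
              = (((q'.1 : ℝ) - q.1)/N) • (o 2 - o 1)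
                + (((q'.2 : ℝ) - q.2)/N) • (o 3 - o 1) := by
            funext j
            simp only [hgp, hcombo, hμ0v, hμ1v, hμ2v, Pi.add_apply, Pi.sub_apply,
              Pi.smul_apply, smul_eq_mul]
            field_simp
            ring
          have habs1 : |((q'.1 : ℝ) - q.1)/N| ≤ 1/N := by
            rw [abs_div, abs_of_pos hNR]
            gcongr
            rw [abs_le]
            constructor
            · have : (q.1 : ℝ) ≤ (q'.1 : ℝ) + 1 := by exact_mod_cast h1'
              linarith
            · have : (q'.1 : ℝ) ≤ (q.1 : ℝ) + 1 := by exact_mod_cast h2'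
              linarith
          have habs2 : |((q'.2 : ℝ) - q.2)/N| ≤ 1/N := by
            rw [abs_div, abs_of_pos hNR]
            gcongr
            rw [abs_le]
            constructor
            · have : (q.2 : ℝ) ≤ (q'.2 : ℝ) + 1 := by exact_mod_cast h3'
              linarith
            · have : (q'.2 : ℝ) ≤ (q.2 : ℝ) + 1 := by exact_mod_cast h4'
              linarith
          rw [e]
          calc ‖(((q'.1 : ℝ) - q.1)/N) • (o 2 - o 1) + (((q'.2 : ℝ) - q.2)/N) • (o 3 - o 1)‖
              ≤ ‖(((q'.1 : ℝ) - q.1)/N) • (o 2 - o 1)‖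
                + ‖(((q'.2 : ℝ) - q.2)/N) • (o 3 - o 1)‖ := norm_add_le _ _
            _ = |((q'.1 : ℝ) - q.1)/N| * ‖o 2 - o 1‖
                + |((q'.2 : ℝ) - q.2)/N| * ‖o 3 - o 1‖ := by
                rw [norm_smul, norm_smul, Real.norm_eq_abs, Real.norm_eq_abs]
            _ ≤ (1/N) * ‖o 2 - o 1‖ + (1/N) * ‖o 3 - o 1‖ :=
                add_le_add (mul_le_mul_of_nonneg_right habs1 (norm_nonneg _))
                  (mul_le_mul_of_nonneg_right habs2 (norm_nonneg _))
            _ = (‖o 2 - o 1‖ + ‖o 3 - o 1‖) / N := by ring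
        refine ⟨gp N a, gp N b, gp N c,
          hgpG N hN a (by omega), hgpG N hN b (by omega), hgpG N hN c (by omega),
          ((hLspec N a).1 hLa).1, ((hLspec N b).2.1 hLb).1,
          hpos3 N hN c (by omega) hLc, ?_, ?_⟩
        · rw [← hNcast]
          exact hdiff a b (by omega) (by omega) (by omega) (by omega)
        · rw [← hNcast]
          exact hdiff a c (by omega) (by omega) (by omega) (by omega)
      -- pass to a convergent subsequence
      choose pa pb pc hpaG hpbG hpcG hpa1 hpb2 hpc3 hdb hdc using hrain
      have hGcpt : IsCompact G := by
        rw [hG]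
        exact (Set.toFinite _).isCompact_convexHull ℝ
      obtain ⟨xb, hxbG, φ, hφ, hconv⟩ := hGcpt.tendsto_subseq hpaG
      set CC := ‖o 2 - o 1‖ + ‖o 3 - o 1‖ with hCC
      have hzero : Filter.Tendsto (fun m : ℕ => CC / ((m : ℝ) + 1))
          Filter.atTop (nhds 0) := by
        have h1 := (tendsto_const_div_atTop_nhds_zero_nat CC).comp
          (Filter.tendsto_add_atTop_nat 1)
        refine h1.congr fun m => ?_
        simp only [Function.comp_apply]
        push_cast
        ring
      have hzero' : Filter.Tendsto (fun n : ℕ => CC / ((φ n : ℝ) + 1))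
          Filter.atTop (nhds 0) := hzero.comp hφ.tendsto_atTop
      have hdistconv : Filter.Tendsto (fun n => dist (pa (φ n)) xb)
          Filter.atTop (nhds 0) := tendsto_iff_dist_tendsto_zero.1 hconv
      have hseq : ∀ q : ℕ → Fin 3 → ℝ, (∀ n, q n ∈ G) →
          (∀ n, ‖q n - pa n‖ ≤ CC / ((n : ℝ) + 1)) →
          Filter.Tendsto (fun n => q (φ n)) Filter.atTop (nhds xb) := by
        intro q hqG hq
        rw [tendsto_iff_dist_tendsto_zero]
        have hb : ∀ n, dist (q (φ n)) xb
            ≤ CC / ((φ n : ℝ) + 1) + dist (pa (φ n)) xb := by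
          intro n
          calc dist (q (φ n)) xb
              ≤ dist (q (φ n)) (pa (φ n)) + dist (pa (φ n)) xb := dist_triangle _ _ _
            _ ≤ CC / ((φ n : ℝ) + 1) + dist (pa (φ n)) xb := by
                have := hq (φ n)
                rw [dist_eq_norm]
                linarith
        have hnull : Filter.Tendsto
            (fun n => CC / ((φ n : ℝ) + 1) + dist (pa (φ n)) xb)
            Filter.atTop (nhds 0) := by
          have := hzero'.add hdistconv
          simpa using this
        exact squeeze_zero (fun n => dist_nonneg) hb hnull
      have hpbconv := hseq pb hpbG hdb
      have hpcconv := hseq pc hpcG hdc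
      have hdotc : ∀ j : Fin 4, Continuous fun y : Fin 3 → ℝ => h j ⬝ᵥ y := by
        intro j
        have he : (fun y : Fin 3 → ℝ => h j ⬝ᵥ y) = fun y => ∑ i, h j i * y i := rfl
        rw [he]
        exact continuous_finset_sum _ fun i _ => continuous_const.mul (continuous_apply i)
      have hlim : ∀ (j : Fin 4) (s : ℕ → Fin 3 → ℝ), (∀ n, s n ∈ G) →
          Filter.Tendsto s Filter.atTop (nhds xb) →
          (∀ n, 0 < h j ⬝ᵥ f (s n)) → 0 ≤ h j ⬝ᵥ f xb := by
        intro j s hsG hst hpos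
        have h1 : Filter.Tendsto (fun n => f (s n)) Filter.atTop (nhds (f xb)) :=
          (hfc xb hxbG).tendsto.comp
            (tendsto_nhdsWithin_iff.2 ⟨hst, Filter.Eventually.of_forall hsG⟩)
        have h2 : Filter.Tendsto (fun n => h j ⬝ᵥ f (s n)) Filter.atTop
            (nhds (h j ⬝ᵥ f xb)) := ((hdotc j).tendsto _).comp h1
        exact ge_of_tendsto h2 (Filter.Eventually.of_forall fun n => (hpos n).le)
      have hge1 := hlim 1 (fun n => pa (φ n)) (fun n => hpaG (φ n)) hconv
        (fun n => hpa1 (φ n))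
      have hge2 := hlim 2 (fun n => pb (φ n)) (fun n => hpbG (φ n)) hpbconv
        (fun n => hpb2 (φ n))
      have hge3 := hlim 3 (fun n => pc (φ n)) (fun n => hpcG (φ n)) hpcconv
        (fun n => hpc3 (φ n))
      intro heq
      have hmemS : -f xb ∈
          (↑B ∩ {y : Fin 3 → ℝ | ∀ j : Fin 4, j ≠ 0 → h j ⬝ᵥ y ≤ 0} :
            Set (Fin 3 → ℝ)) := by
        refine ⟨B.neg_mem (hf xb hxbG).1, fun j hj => ?_⟩
        rw [dotProduct_neg]
        rcases Sperner12.fin4cases j hj with rfl | rfl | rfl <;> linarith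
      rw [heq] at hmemS
      have hfz : f xb = 0 := neg_eq_zero.1 (by simpa using hmemS)
      exact (hf xb hxbG).2.1 hfz
  · intro hne
    obtain ⟨y, hy, hy0⟩ : ∃ y, y ∈
        (↑B ∩ {y : Fin 3 → ℝ | ∀ j : Fin 4, j ≠ 0 → h j ⬝ᵥ y ≤ 0} : Set (Fin 3 → ℝ)) ∧
        y ≠ 0 := by
      by_contra hc
      push_neg at hc
      exact hne (Set.eq_singleton_iff_unique_mem.2 ⟨hS0, fun y hy => hc y hy⟩)
    exact ⟨fun _ => y, continuousOn_const,
      fun x _ => ⟨hy.1, hy0, fun j hj _ => hy.2 j hj⟩⟩
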